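/- Let M be a 3-connected matroid and let e ∈ E(M). Then si(M/e) is not 3-connected if and only if M has a vertical 3-separation (X, {e}, Y). Dually, co(M\e) is not 3-connected if and only if M has a cyclic 3-separation (X, {e}, Y). -/

import Mathlib

open Set Matroid

namespace ElasticPaper

variable {α : Type*}

/-! ### Basic operations: deletion, contraction, minors, isomorphism -/

/-- The deletion `M \ D`. -/
def del (M : Matroid α) (D : Set α) : Matroid α := M ↾ (M.E \ D)

/-- The contraction `M / C`. -/
def con (M : Matroid α) (C : Set α) : Matroid α := (del M✶ C)✶

/-- `N` is a minor of `M`. -/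
def IsMinorOf (N M : Matroid α) : Prop := ∃ C D : Set α, N = del (con M C) D

/-- Isomorphism of matroids (on a common label type). -/
def Iso (M N : Matroid α) : Prop :=
  ∃ f : α → α, Set.BijOn f M.E N.E ∧ ∀ I ⊆ M.E, (M.Indep I ↔ N.Indep (f '' I))

/-- `M` has a minor isomorphic to `N`. -/
def HasMinorIso (M N : Matroid α) : Prop := ∃ N', IsMinorOf N' M ∧ Iso N N'

/-! ### Rank and connectivity -/

/-- The rank of a set, valued in `ℕ∞`. -/
noncomputable def eRk (M : Matroid α) (X : Set α) : ℕ∞ :=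
  ⨆ I ∈ {I : Set α | M.Indep I ∧ I ⊆ X}, I.encard

/-- The rank of a matroid. -/
noncomputable def eRank (M : Matroid α) : ℕ∞ := eRk M M.E

/-- `X` is `k`-separating in `M`, i.e. `λ(X) ≤ k - 1`. -/
def KSeparating (M : Matroid α) (k : ℕ) (X : Set α) : Prop :=
  eRk M X + eRk M (M.E \ X) + 1 ≤ eRank M + (k : ℕ∞)

/-- `X` is exactly `k`-separating in `M`, i.e. `λ(X) = k - 1`. -/
def ExactlyKSeparating (M : Matroid α) (k : ℕ) (X : Set α) : Prop :=
  eRk M X + eRk M (M.E \ X) + 1 = eRank M + (k : ℕ∞)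

/-- `(X, Y)` is a `k`-separation of `M`. -/
def KSeparation (M : Matroid α) (k : ℕ) (X Y : Set α) : Prop :=
  Disjoint X Y ∧ X ∪ Y = M.E ∧ KSeparating M k X ∧
    (k : ℕ∞) ≤ X.encard ∧ (k : ℕ∞) ≤ Y.encard

/-- `M` is `n`-connected: it has no `k`-separations for `k < n`. -/
def NConnected (M : Matroid α) (n : ℕ) : Prop :=
  ∀ k X Y, k < n → ¬ KSeparation M k X Y

/-- `M` is `3`-connected. -/
abbrev ThreeConnected (M : Matroid α) : Prop := NConnected M 3

/-- `(X, Y)` is a vertical `k`-separation of `M`. -/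
def VerticalKSeparation (M : Matroid α) (k : ℕ) (X Y : Set α) : Prop :=
  KSeparation M k X Y ∧ (k : ℕ∞) ≤ eRk M X ∧ (k : ℕ∞) ≤ eRk M Y

/-- `(X, {e}, Y)` is a vertical `3`-separation of `M`. -/
def Vertical3Sep (M : Matroid α) (X : Set α) (e : α) (Y : Set α) : Prop :=
  e ∉ X ∧ e ∉ Y ∧ Disjoint X Y ∧ X ∪ {e} ∪ Y = M.E ∧
  VerticalKSeparation M 3 (X ∪ {e}) Y ∧ VerticalKSeparation M 3 X (Y ∪ {e}) ∧
  e ∈ M.closure X ∧ e ∈ M.closure Y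

/-- `(X, {e}, Y)` is a cyclic `3`-separation of `M`. -/
def Cyclic3Sep (M : Matroid α) (X : Set α) (e : α) (Y : Set α) : Prop :=
  Vertical3Sep M✶ X e Y

/-- `Y ∪ {e}` is maximal among vertical 3-separations of `M`. -/
def VertMaximal (M : Matroid α) (e : α) (Y : Set α) : Prop :=
  ∀ X' : Set α, ∀ e' : α, ∀ Y' : Set α,
    Vertical3Sep M X' e' Y' → ¬ (Y ∪ {e} ⊂ Y' ∪ {e'})

/-! ### Circuits, fans -/

/-- A circuit is a minimal dependent set. -/
def Circuit (M : Matroid α) (C : Set α) : Prop := M.Dep C ∧ ∀ D, D ⊂ C → M.Indep D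

/-- A triangle is a 3-element circuit. -/
def Triangle (M : Matroid α) (T : Set α) : Prop := Circuit M T ∧ T.encard = 3

/-- A triad is a 3-element cocircuit. -/
def Triad (M : Matroid α) (T : Set α) : Prop := Circuit M✶ T ∧ T.encard = 3

/-- `f 0, f 1, …, f (k-1)` is a fan ordering in `M`. -/
def FanOrdering (M : Matroid α) (k : ℕ) (f : ℕ → α) : Prop :=
  3 ≤ k ∧ Set.InjOn f (Set.Iio k) ∧ (∀ i < k, f i ∈ M.E) ∧
  (∀ i, i + 2 < k →
    (Triangle M {f i, f (i+1), f (i+2)} ∨ Triad M {f i, f (i+1), f (i+2)})) ∧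
  (∀ i, i + 3 < k →
    (Triangle M {f i, f (i+1), f (i+2)} → Triad M {f (i+1), f (i+2), f (i+3)}) ∧
    (Triad M {f i, f (i+1), f (i+2)} → Triangle M {f (i+1), f (i+2), f (i+3)}))

/-- `F` is a fan of `M`. -/
def IsFan (M : Matroid α) (F : Set α) : Prop :=
  ∃ k f, FanOrdering M k f ∧ F = f '' (Set.Iio k)

/-- `M` has no 4-element fans. -/
def NoFourElementFan (M : Matroid α) : Prop := ¬ ∃ F, IsFan M F ∧ F.encard = 4

/-- A convenient ordering function for a 4-element fan. -/
def quad (a b c d : α) : ℕ → α :=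
  fun i => if i = 0 then a else if i = 1 then b else if i = 2 then c else d

/-! ### Simplification and cosimplification -/

/-- `e` is a nonloop of `M`. -/
def Nonloop (M : Matroid α) (e : α) : Prop := M.Indep {e}

/-- `S` is a simplification of `M`: the restriction of `M` to a transversal of the
parallel classes of `M`. -/
def IsSimplificationOf (S M : Matroid α) : Prop :=
  ∃ X : Set α, (∀ x ∈ X, Nonloop M x) ∧
    (∀ e, Nonloop M e → ∃! x, x ∈ X ∧ M.closure {x} = M.closure {e}) ∧
    S = M ↾ X

/-- `S` is a cosimplification of `M`. -/
def IsCosimplificationOf (S M : Matroid α) : Prop := IsSimplificationOf S✶ M✶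

/-- `si M` is 3-connected. -/
def SiConn3 (M : Matroid α) : Prop := ∀ S, IsSimplificationOf S M → ThreeConnected S

/-- `co M` is 3-connected. -/
def CoConn3 (M : Matroid α) : Prop := ∀ S, IsCosimplificationOf S M → ThreeConnected S

/-- `si M` has an `N`-minor. -/
def SiHasMinor (M N : Matroid α) : Prop := ∀ S, IsSimplificationOf S M → HasMinorIso S N

/-- `co M` has an `N`-minor. -/
def CoHasMinor (M N : Matroid α) : Prop := ∀ S, IsCosimplificationOf S M → HasMinorIso S N

/-! ### Elastic, N-elastic, N-revealing elements -/

/-- `e` is an elastic element of `M`. -/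
def Elastic (M : Matroid α) (e : α) : Prop :=
  e ∈ M.E ∧ SiConn3 (con M {e}) ∧ CoConn3 (del M {e})

/-- `e` is an `N`-elastic element of `M`. -/
def NElastic (M N : Matroid α) (e : α) : Prop :=
  Elastic M e ∧ SiHasMinor (con M {e}) N ∧ CoHasMinor (del M {e}) N

/-- `e` is an `N`-revealing element of `M`. -/
def NRevealing (M N : Matroid α) (e : α) : Prop :=
  e ∈ M.E ∧
    ((SiHasMinor (con M {e}) N ∧ ¬ SiConn3 (con M {e})) ∨
     (CoHasMinor (del M {e}) N ∧ ¬ CoConn3 (del M {e})))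

/-! ### Theta matroids and Theta-separators -/

/-- `M` is (isomorphic to) `Θ_n` or `Θ_n⁻`, with segment elements `W` and cosegment
elements `Z` (so `n = |Z|`). This is expressed by listing the circuits. -/
def ThetaParts (M : Matroid α) (W Z : Set α) : Prop :=
  M.E = W ∪ Z ∧ Disjoint W Z ∧ W.Finite ∧ Z.Finite ∧
  (W.ncard = Z.ncard ∨ W.ncard + 1 = Z.ncard) ∧
  ∃ f : α → α, Set.InjOn f W ∧ f '' W ⊆ Z ∧
    ∀ C, Circuit M C ↔
      ((C ⊆ W ∧ C.encard = 3) ∨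
       (∃ w ∈ W, C = insert w (Z \ {f w})) ∨
       (∃ w ∈ W, ∃ w' ∈ W, ∃ z ∈ Z, w ≠ w' ∧ z ≠ f w ∧ z ≠ f w' ∧
         C = insert w (insert w' (Z \ {z}))))

/-- `W ∪ Z` is a Θ-separator of `M`, where `W` is a rank-2 subset and `Z` a corank-2
subset of `E(M)`. -/
def ThetaSeparatorParts (M : Matroid α) (W Z : Set α) : Prop :=
  W ⊆ M.E ∧ Z ⊆ M.E ∧ 4 ≤ eRank M ∧ 4 ≤ eRank M✶ ∧
  eRk M W = 2 ∧ eRk M✶ Z = 2 ∧ 3 ≤ max W.ncard Z.ncard ∧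
  (ThetaParts (M ↾ (W ∪ Z)) W Z ∨ ThetaParts (M✶ ↾ (W ∪ Z)) Z W)

/-- `S` is a Θ-separator of `M`. -/
def ThetaSeparator (M : Matroid α) (S : Set α) : Prop :=
  ∃ W Z : Set α, S = W ∪ Z ∧ ThetaSeparatorParts M W Z

/-- `S` is a Θ-separator of `M` revealing the minor `N`. -/
def ThetaSeparatorRevealing (M N : Matroid α) (S : Set α) : Prop :=
  ∃ W Z : Set α, S = W ∪ Z ∧ W ⊆ M.E ∧ Z ⊆ M.E ∧ 4 ≤ eRank M ∧ 4 ≤ eRank M✶ ∧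
    eRk M W = 2 ∧ eRk M✶ Z = 2 ∧ 3 ≤ max W.ncard Z.ncard ∧
    ((ThetaParts (M ↾ (W ∪ Z)) W Z ∧ ∃ z ∈ Z, NRevealing M N z) ∨
     (ThetaParts (M✶ ↾ (W ∪ Z)) Z W ∧ ∃ w ∈ W, NRevealing M✶ N✶ w))

/-! ### Paths of 3-separations, path-width, sequential separations -/

/-- `M` has path-width three. -/
def PathWidthThree (M : Matroid α) : Prop :=
  ∃ (k : ℕ) (f : ℕ → α), Set.InjOn f (Set.Iio k) ∧ f '' (Set.Iio k) = M.E ∧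
    ∀ i ≤ k, KSeparating M 3 (f '' Set.Iio i)

/-- `(X, Y)` is a sequential 3-separation of `M`. -/
def SequentialThreeSeparation (M : Matroid α) (X Y : Set α) : Prop :=
  Disjoint X Y ∧ X ∪ Y = M.E ∧ ExactlyKSeparating M 3 X ∧
  ∃ U, (U = X ∨ U = Y) ∧ ∃ (k : ℕ) (f : ℕ → α), Set.InjOn f (Set.Iio k) ∧
    f '' (Set.Iio k) = U ∧ ∀ i ≤ k, KSeparating M 3 (f '' Set.Iio i)

/-! ### Flowers and M(K₄) -/

/-- `(P₁, P₂, P₃, P₄)` is a swirl-like flower of `M` with four petals. -/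
def SwirlLikeFlower4 (M : Matroid α) (P₁ P₂ P₃ P₄ : Set α) : Prop :=
  Disjoint P₁ P₂ ∧ Disjoint P₁ P₃ ∧ Disjoint P₁ P₄ ∧
  Disjoint P₂ P₃ ∧ Disjoint P₂ P₄ ∧ Disjoint P₃ P₄ ∧
  P₁ ∪ P₂ ∪ P₃ ∪ P₄ = M.E ∧
  2 ≤ P₁.encard ∧ 2 ≤ P₂.encard ∧ 2 ≤ P₃.encard ∧ 2 ≤ P₄.encard ∧
  KSeparating M 3 P₁ ∧ KSeparating M 3 P₂ ∧ KSeparating M 3 P₃ ∧ KSeparating M 3 P₄ ∧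
  KSeparating M 3 (P₁ ∪ P₂) ∧ KSeparating M 3 (P₂ ∪ P₃) ∧
  KSeparating M 3 (P₃ ∪ P₄) ∧ KSeparating M 3 (P₄ ∪ P₁) ∧
  eRk M P₁ + eRk M P₂ = eRk M (P₁ ∪ P₂) + 1 ∧
  eRk M P₂ + eRk M P₃ = eRk M (P₂ ∪ P₃) + 1 ∧
  eRk M P₃ + eRk M P₄ = eRk M (P₃ ∪ P₄) + 1 ∧
  eRk M P₄ + eRk M P₁ = eRk M (P₄ ∪ P₁) + 1 ∧
  eRk M P₁ + eRk M P₃ = eRk M (P₁ ∪ P₃) ∧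
  eRk M P₂ + eRk M P₄ = eRk M (P₂ ∪ P₄)

/-- `Q` is isomorphic to the cycle matroid `M(K₄)`. -/
def IsMK4 (Q : Matroid α) : Prop :=
  ∃ p q r s t u : α, ([p, q, r, s, t, u] : List α).Nodup ∧
    Q.E = {p, q, r, s, t, u} ∧
    ∀ C, Circuit Q C ↔
      C ∈ ({{p, q, s}, {p, r, t}, {q, r, u}, {s, t, u},
            {p, s, u, r}, {p, t, u, q}, {q, s, t, r}} : Set (Set α))

/-- `N` is isomorphic to the uniform matroid `U_{r,n}`. -/
def IsUnif (N : Matroid α) (r n : ℕ) : Prop :=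
  N.E.encard = (n : ℕ∞) ∧ ∀ I, N.Indep I ↔ I ⊆ N.E ∧ I.encard ≤ (r : ℕ∞)

/-! ### Fixed-basis notions -/

/-- `e` is removable with respect to the basis `B`. -/
def RemovableWrt (M : Matroid α) (B : Set α) (e : α) : Prop :=
  (e ∈ B ∧ SiConn3 (con M {e})) ∨ (e ∈ M.E \ B ∧ CoConn3 (del M {e}))

/-- `e` is `(N, B)`-robust. -/
def NBRobust (M N : Matroid α) (B : Set α) (e : α) : Prop :=
  (e ∈ B ∧ HasMinorIso (con M {e}) N) ∨ (e ∈ M.E \ B ∧ HasMinorIso (del M {e}) N)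

/-- `e` is `(N, B)`-strong. -/
def NBStrong (M N : Matroid α) (B : Set α) (e : α) : Prop :=
  (e ∈ B ∧ SiConn3 (con M {e}) ∧ SiHasMinor (con M {e}) N) ∨
  (e ∈ M.E \ B ∧ CoConn3 (del M {e}) ∧ CoHasMinor (del M {e}) N)



/-! ### Auxiliary development -/

section Aux

variable {M N S : Matroid α} {X Y I J T U V : Set α} {e x y : α}

lemma encard_le_eRk (hI : M.Indep I) (hIX : I ⊆ X) : I.encard ≤ eRk M X :=
  le_iSup₂ (f := fun I (_ : I ∈ {I : Set α | M.Indep I ∧ I ⊆ X}) => I.encard) I ⟨hI, hIX⟩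

lemma eRk_le_of_forall {c : ℕ∞} (h : ∀ I, M.Indep I → I ⊆ X → I.encard ≤ c) :
    eRk M X ≤ c :=
  iSup₂_le fun I hI => h I hI.1 hI.2

lemma eRk_mono (h : X ⊆ Y) : eRk M X ≤ eRk M Y :=
  eRk_le_of_forall fun I hI hIX => encard_le_eRk hI (hIX.trans h)

lemma eRk_le_encard (M : Matroid α) (X : Set α) : eRk M X ≤ X.encard :=
  eRk_le_of_forall fun _ _ h => Set.encard_le_encard h

lemma eRk_eq_of_basis' (hI : M.IsBasis' I X) : eRk M X = I.encard := by
  refine le_antisymm (eRk_le_of_forall fun J hJ hJX => ?_) (encard_le_eRk hI.indep hI.subset)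
  have hJR : (M ↾ X).Indep J := Matroid.restrict_indep_iff.2 ⟨hJ, hJX⟩
  obtain ⟨B, hB, hJB⟩ := hJR.exists_isBase_superset
  have hIB : (M ↾ X).IsBase I := Matroid.isBase_restrict_iff'.2 hI
  exact le_trans (Set.encard_le_encard hJB) (hB.encard_eq_encard_of_isBase hIB).le

lemma eRk_eq_of_basis (hI : M.IsBasis I X) : eRk M X = I.encard := eRk_eq_of_basis' hI.isBasis'

lemma eRk_indep (hI : M.Indep I) : eRk M I = I.encard :=
  eRk_eq_of_basis (Matroid.isBasis_self_iff_indep.2 hI)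

lemma eRk_ne_top [M.Finite] : eRk M X ≠ ⊤ := by
  refine ne_top_of_le_ne_top ?_ (eRk_le_of_forall fun I hI _ =>
    Set.encard_le_encard hI.subset_ground)
  exact (Set.encard_ne_top_iff.2 M.ground_finite)

lemma eRk_empty (M : Matroid α) : eRk M (∅ : Set α) = 0 :=
  le_antisymm (by simpa using eRk_le_encard M ∅) zero_le

lemma eRank_eq_eRk_ground (M : Matroid α) : eRank M = eRk M M.E := rfl

lemma eRank_eq_of_base {B : Set α} (hB : M.IsBase B) : eRank M = B.encard :=
  eRk_eq_of_basis hB.isBasis_ground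

end Aux

section Aux2

variable {M : Matroid α} {X Y I J : Set α} {e x y : α}

lemma eRk_closure_eq (hX : X ⊆ M.E) : eRk M (M.closure X) = eRk M X := by
  obtain ⟨I, hI⟩ := M.exists_isBasis X hX
  rw [eRk_eq_of_basis hI.isBasis_closure_right, eRk_eq_of_basis hI]

lemma eRk_union_eq_of_subset_closure (hX : X ⊆ M.E) (hY : Y ⊆ M.closure X) :
    eRk M (X ∪ Y) = eRk M X := by
  refine le_antisymm ?_ (eRk_mono subset_union_left)
  have h1 : X ∪ Y ⊆ M.closure X := union_subset (M.subset_closure X hX) hY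
  exact le_trans (eRk_mono h1) (eRk_closure_eq hX).le

lemma eRk_insert_le (M : Matroid α) (x : α) (X : Set α) :
    eRk M (insert x X) ≤ eRk M X + 1 := by
  refine eRk_le_of_forall fun I hI hIX => ?_
  by_cases hxI : x ∈ I
  · have h1 : I \ {x} ⊆ X := by
      intro a ha; rcases hIX ha.1 with h | h
      · exact absurd h ha.2
      · exact h
    calc I.encard = (I \ {x}).encard + 1 := (Set.encard_diff_singleton_add_one hxI).symm
    _ ≤ eRk M X + 1 := add_le_add_left (encard_le_eRk (hI.subset diff_subset) h1) 1
  · have h1 : I ⊆ X := fun a ha => (hIX ha).resolve_left (fun h => hxI (h ▸ ha))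
    exact le_trans (encard_le_eRk hI h1) le_self_add

lemma eRk_insert_of_not_mem_closure (hX : X ⊆ M.E) (hx : x ∈ M.E)
    (h : x ∉ M.closure X) : eRk M (insert x X) = eRk M X + 1 := by
  obtain ⟨I, hI⟩ := M.exists_isBasis X hX
  have hxcl : x ∉ M.closure I := by rwa [hI.closure_eq_closure]
  have hxI : x ∉ I := fun hxI => hxcl (M.mem_closure_of_mem' hxI hx)
  have hind : M.Indep (insert x I) := by
    rw [hI.indep.insert_indep_iff_of_notMem hxI]; exact ⟨hx, hxcl⟩
  refine le_antisymm (eRk_insert_le M x X) ?_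
  have h2 : (insert x I).encard ≤ eRk M (insert x X) :=
    encard_le_eRk hind (insert_subset_insert hI.subset)
  rw [eRk_eq_of_basis hI]
  rwa [Set.encard_insert_of_notMem hxI] at h2

lemma mem_closure_iff_eRk [M.Finite] (hX : X ⊆ M.E) (hx : x ∈ M.E) :
    x ∈ M.closure X ↔ eRk M (insert x X) = eRk M X := by
  constructor
  · intro h
    rw [← union_singleton]
    exact eRk_union_eq_of_subset_closure hX (by simpa using h)
  · intro h
    by_contra hcl
    rw [eRk_insert_of_not_mem_closure hX hx hcl] at h
    have h1 : eRk M X + 1 = eRk M X + 0 := by rw [add_zero]; exact h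
    have h2 : (1 : ℕ∞) = 0 := WithTop.add_left_cancel eRk_ne_top h1
    simp at h2

lemma eRk_union_le (M : Matroid α) (X Y : Set α) :
    eRk M (X ∪ Y) ≤ eRk M X + eRk M Y := by
  refine eRk_le_of_forall fun I hI hIXY => ?_
  have h1 : I = (I ∩ X) ∪ (I \ X) := (Set.inter_union_diff I X).symm
  have h2 : I.encard ≤ (I ∩ X).encard + (I \ X).encard := by
    nth_rewrite 1 [h1]; exact Set.encard_union_le _ _
  have h3 : (I ∩ X).encard ≤ eRk M X :=
    encard_le_eRk (hI.subset inter_subset_left) inter_subset_right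
  have h4 : (I \ X).encard ≤ eRk M Y := by
    refine encard_le_eRk (hI.subset diff_subset) fun a ha => (hIXY ha.1).resolve_left ha.2
  exact h2.trans (add_le_add h3 h4)

lemma eRank_eq_of_spanning [M.Finite] (hX : X ⊆ M.E) (h : M.E ⊆ M.closure X) :
    eRank M = eRk M X := by
  rw [eRank_eq_eRk_ground, ← eRk_union_eq_of_subset_closure hX h, union_eq_self_of_subset_left hX]

lemma closure_pair_eq [M.Finite] (hx : M.Indep {x}) (hy : M.Indep {y})
    (h : y ∈ M.closure {x}) : M.closure {x} = M.closure {y} := by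
  have hxE : x ∈ M.E := hx.subset_ground rfl
  have hyE : y ∈ M.E := hy.subset_ground rfl
  have h1 : M.closure (insert y {x}) = M.closure {x} :=
    Matroid.closure_insert_eq_of_mem_closure h
  have hr1 : eRk M (insert y {x}) = eRk M {x} := by
    rw [← union_singleton]
    exact eRk_union_eq_of_subset_closure (by simpa using hxE) (by simpa using h)
  have hrx : eRk M {x} = 1 := by rw [eRk_indep hx, Set.encard_singleton]
  have hry : eRk M {y} = 1 := by rw [eRk_indep hy, Set.encard_singleton]
  have hxy : x ∈ M.closure {y} := by
    rw [mem_closure_iff_eRk (by simpa using hyE) hxE]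
    rw [hry, ← hrx, ← hr1]
    congr 1
    exact Set.pair_comm x y
  have h2 : M.closure (insert x {y}) = M.closure {y} :=
    Matroid.closure_insert_eq_of_mem_closure hxy
  rw [← h1, ← h2]
  rw [Set.pair_comm y x]

end Aux2

section Con

variable {M : Matroid α} {X I D B K : Set α} {e x : α}

lemma del_ground' (M : Matroid α) (D : Set α) : (del M D).E = M.E \ D := rfl

lemma con_ground' (M : Matroid α) (C : Set α) : (con M C).E = M.E \ C := rfl

lemma finite_con [M.Finite] (C : Set α) : (con M C).Finite :=
  ⟨M.ground_finite.subset (by rw [con_ground']; exact diff_subset)⟩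

lemma eRk_restrict {R : Set α} (h : X ⊆ R) : eRk (M ↾ R) X = eRk M X := by
  apply le_antisymm
  · exact eRk_le_of_forall fun I hI hIX => encard_le_eRk hI.of_restrict hIX
  · exact eRk_le_of_forall fun I hI hIX =>
      encard_le_eRk (Matroid.restrict_indep_iff.2 ⟨hI, hIX.trans h⟩) hIX

/-- A dual base contained in `M.E \ {e}` is a dual basis of it. -/
lemma dual_base_basis_diff (hK : M✶.IsBase K) (hKe : K ⊆ M.E \ {e}) :
    M✶.IsBasis K (M.E \ {e}) := by
  refine hK.indep.isBasis_of_maximal_subset hKe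
    (fun J hJ hKJ _ => (hK.eq_of_subset_indep hJ hKJ) ▸ subset_rfl) ?_
  rw [Matroid.dual_ground]
  exact diff_subset

/-- If `e` is a nonloop, any dual basis of `M.E \ {e}` is a dual base. -/
lemma dual_basis_diff_base [M.Finite] (hne : M.Indep {e})
    (hK : M✶.IsBasis K (M.E \ {e})) : M✶.IsBase K := by
  obtain ⟨B₀, hB₀, heB₀⟩ := hne.exists_isBase_superset
  have hK₀ : M✶.IsBasis (M.E \ B₀) (M.E \ {e}) := by
    refine dual_base_basis_diff hB₀.compl_isBase_dual ?_
    exact diff_subset_diff_right (singleton_subset_iff.2 (heB₀ rfl))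
  have hcard : K.encard = (M.E \ B₀).encard := by
    have h1 := hK.restrict_isBase
    have h2 := hK₀.restrict_isBase
    exact h1.encard_eq_encard_of_isBase h2
  obtain ⟨B₁, hB₁, hKB₁⟩ := hK.indep.exists_isBase_superset
  have hcard2 : B₁.encard = (M.E \ B₀).encard :=
    hB₁.encard_eq_encard_of_isBase hB₀.compl_isBase_dual
  have hfin : B₁.Finite := M✶.set_finite B₁ hB₁.subset_ground
  have : K = B₁ := hfin.eq_of_subset_of_encard_le' hKB₁ (by rw [hcard2, ← hcard])
  rwa [this]

lemma base_con_iff [M.Finite] (he : e ∈ M.E) (hne : M.Indep {e}) :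
    (con M {e}).IsBase D ↔ e ∉ D ∧ M.IsBase (insert e D) := by
  have hd : (con M {e}).IsBase D ↔
      (del M✶ {e}).IsBase ((M.E \ {e}) \ D) ∧ D ⊆ M.E \ {e} :=
    Matroid.dual_isBase_iff'
  have hr : (del M✶ {e}).IsBase ((M.E \ {e}) \ D) ↔ M✶.IsBasis' ((M.E \ {e}) \ D) (M.E \ {e}) :=
    Matroid.isBase_restrict_iff'
  constructor
  · intro h
    obtain ⟨h1, h2⟩ := hd.1 h
    have hb' : M✶.IsBasis ((M.E \ {e}) \ D) (M.E \ {e}) :=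
      (hr.1 h1).isBasis (by rw [Matroid.dual_ground]; exact diff_subset)
    have hbase : M✶.IsBase ((M.E \ {e}) \ D) := dual_basis_diff_base hne hb'
    have hDE : D ⊆ M.E := h2.trans diff_subset
    have heD : e ∉ D := fun hh => (h2 hh).2 rfl
    have hset : M.E \ ((M.E \ {e}) \ D) = insert e D := by
      ext a
      simp only [Set.mem_diff, Set.mem_insert_iff, Set.mem_singleton_iff, not_and, not_not]
      constructor
      · rintro ⟨haE, hh⟩
        by_cases hae : a = e
        · exact Or.inl hae
        · exact Or.inr (hh ⟨haE, hae⟩)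
      · rintro (rfl | haD)
        · exact ⟨he, fun hh => absurd rfl hh.2⟩
        · exact ⟨hDE haD, fun _ => haD⟩
    have h3 := hbase.compl_isBase_of_dual
    rw [hset] at h3
    exact ⟨heD, h3⟩
  · rintro ⟨heD, hbase⟩
    have hDE : D ⊆ M.E := (subset_insert e D).trans hbase.subset_ground
    have hset : M.E \ insert e D = (M.E \ {e}) \ D := by
      ext a
      simp only [Set.mem_diff, Set.mem_insert_iff, Set.mem_singleton_iff, not_or]
      tauto
    have hKbase : M✶.IsBase (M.E \ insert e D) := hbase.compl_isBase_dual
    have hb' : M✶.IsBasis ((M.E \ {e}) \ D) (M.E \ {e}) := by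
      rw [← hset]
      refine dual_base_basis_diff hKbase ?_
      rw [hset]
      exact diff_subset
    refine hd.2 ⟨hr.2 hb'.isBasis', fun a ha => ⟨hDE ha, fun hh => heD (hh ▸ ha)⟩⟩

lemma con_indep_iff [M.Finite] (he : e ∈ M.E) (hne : M.Indep {e}) :
    (con M {e}).Indep I ↔ e ∉ I ∧ M.Indep (insert e I) := by
  constructor
  · intro h
    obtain ⟨D, hD, hID⟩ := h.exists_isBase_superset
    obtain ⟨heD, hB⟩ := (base_con_iff he hne).1 hD
    exact ⟨fun hh => heD (hID hh), hB.indep.subset (insert_subset_insert hID)⟩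
  · rintro ⟨heI, hind⟩
    obtain ⟨B, hB, hIB⟩ := hind.exists_isBase_superset
    have heB : e ∈ B := hIB (mem_insert e I)
    have hD : (con M {e}).IsBase (B \ {e}) := by
      refine (base_con_iff he hne).2 ⟨fun h => h.2 rfl, ?_⟩
      rwa [insert_diff_singleton, insert_eq_self.2 heB]
    exact hD.indep.subset (subset_diff_singleton ((subset_insert e I).trans hIB) heI)

lemma eRk_con [M.Finite] (he : e ∈ M.E) (hne : M.Indep {e}) (hX : X ⊆ M.E \ {e}) :
    eRk (con M {e}) X + 1 = eRk M (insert e X) := by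
  obtain ⟨I, hI⟩ := (con M {e}).exists_isBasis X (by rwa [con_ground'])
  have hIind := (con_indep_iff he hne).1 hI.indep
  have hJ : M.IsBasis (insert e I) (insert e X) := by
    refine hIind.2.isBasis_of_maximal_subset (insert_subset_insert hI.subset) ?_
      (insert_subset he (hX.trans diff_subset))
    intro K hK hJK hKX
    have heK : e ∈ K := hJK (mem_insert _ _)
    have hKe : (con M {e}).Indep (K \ {e}) := by
      refine (con_indep_iff he hne).2 ⟨fun h => h.2 rfl, ?_⟩
      rwa [insert_diff_singleton, insert_eq_self.2 heK]
    have hKeX : K \ {e} ⊆ X := by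
      intro a ha
      rcases hKX ha.1 with h | h
      · exact absurd h ha.2
      · exact h
    have hIK : I ⊆ K \ {e} :=
      subset_diff_singleton ((subset_insert e I).trans hJK) hIind.1
    have heq : I = K \ {e} := hI.eq_of_subset_indep hKe hIK hKeX
    intro a haK
    by_cases hae : a = e
    · exact hae ▸ mem_insert _ _
    · exact mem_insert_iff.2 (Or.inr (by rw [heq]; exact ⟨haK, hae⟩))
  rw [eRk_eq_of_basis hI, eRk_eq_of_basis hJ, Set.encard_insert_of_notMem hIind.1]

lemma eRank_con [M.Finite] (he : e ∈ M.E) (hne : M.Indep {e}) :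
    eRank (con M {e}) + 1 = eRank M := by
  have h := eRk_con he hne (X := M.E \ {e}) subset_rfl
  rw [insert_diff_singleton, insert_eq_self.2 he] at h
  rw [eRank_eq_eRk_ground, eRank_eq_eRk_ground, con_ground']
  exact h

end Con

section ThreeConn

variable {M : Matroid α} {X Y : Set α} {e x y : α}

lemma nonloop_of_threeConnected [M.Finite] (hM : ThreeConnected M) (hx : x ∈ M.E)
    (hcard : 2 ≤ M.E.encard) : M.Indep {x} := by
  by_contra hloop
  refine hM 1 {x} (M.E \ {x}) (by norm_num) ?_
  have hr0 : eRk M {x} = 0 := by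
    refine le_antisymm (eRk_le_of_forall fun I hI hIx => ?_) zero_le
    rcases subset_singleton_iff_eq.1 hIx with rfl | rfl
    · simp
    · exact absurd hI hloop
  have hsep : KSeparating M 1 {x} := by
    show eRk M {x} + eRk M (M.E \ {x}) + 1 ≤ eRank M + (1 : ℕ)
    rw [hr0, zero_add, Nat.cast_one]
    exact add_le_add (eRk_mono diff_subset) le_rfl
  refine ⟨disjoint_sdiff_right, union_diff_cancel (by simpa using hx), hsep, by simp, ?_⟩
  have hne : (M.E \ {x}).Nonempty := by
    obtain ⟨b, hb, hbx⟩ := Set.exists_ne_of_one_lt_encard (lt_of_lt_of_le (by norm_num : (1:ℕ∞) < 2) hcard) x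
    exact ⟨b, hb, hbx⟩
  simpa [Set.one_le_encard_iff_nonempty] using hne

lemma no_parallel_of_threeConnected [M.Finite] (hM : ThreeConnected M) (hx : x ∈ M.E)
    (hy : y ∈ M.E) (hxy : x ≠ y) (hcl : y ∈ M.closure {x})
    (hbig : 2 ≤ (M.E \ {x, y}).encard) : False := by
  refine hM 2 {x, y} (M.E \ {x, y}) (by norm_num) ?_
  have hpair : ({x, y} : Set α) ⊆ M.E := by
    rw [Set.insert_subset_iff, Set.singleton_subset_iff]; exact ⟨hx, hy⟩
  have hr : eRk M {x, y} ≤ 1 := by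
    have h1 : eRk M ({x} ∪ {y}) = eRk M {x} :=
      eRk_union_eq_of_subset_closure (by simpa using hx) (by simpa using hcl)
    rw [Set.singleton_union] at h1
    rw [h1]
    simpa using eRk_le_encard M {x}
  have hsep : KSeparating M 2 {x, y} := by
    show eRk M {x, y} + eRk M (M.E \ {x, y}) + 1 ≤ eRank M + (2 : ℕ)
    have h2 : eRk M {x, y} + eRk M (M.E \ {x, y}) + 1 ≤ 1 + eRank M + 1 :=
      add_le_add (add_le_add hr (eRk_mono diff_subset)) le_rfl
    refine h2.trans ?_
    rw [add_comm 1 (eRank M), add_assoc]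
    norm_num
  refine ⟨disjoint_sdiff_right, union_diff_cancel hpair, hsep, ?_, hbig⟩
  rw [Set.encard_pair hxy]
  norm_num

end ThreeConn

section Simp

lemma exists_simplification (N : Matroid α) : ∃ S, IsSimplificationOf S N := by
  classical
  set P : Set (Set α) := {c | ∃ x, Nonloop N x ∧ N.closure {x} = c} with hP
  have hch : ∀ c ∈ P, ∃ x, Nonloop N x ∧ N.closure {x} = c := fun c hc => hc
  choose f hf1 hf2 using hch
  set T : Set α := {a | ∃ c, ∃ hc : c ∈ P, f c hc = a} with hT
  refine ⟨N ↾ T, T, ?_, ?_, rfl⟩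
  · rintro a ⟨c, hc, rfl⟩
    exact hf1 c hc
  · intro e he
    have hceP : N.closure {e} ∈ P := ⟨e, he, rfl⟩
    refine ⟨f _ hceP, ⟨⟨_, hceP, rfl⟩, hf2 _ hceP⟩, ?_⟩
    rintro a ⟨⟨c, hc, rfl⟩, hcl⟩
    have : c = N.closure {e} := by rw [← hf2 c hc, hcl]
    subst this
    rfl

end Simp

section SimpFacts

variable {N S M : Matroid α} {T U V X Y : Set α} {t x e : α}

lemma simp_subset_ground (hT1 : ∀ x ∈ T, Nonloop N x) : T ⊆ N.E := fun x hx =>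
  singleton_subset_iff.1 (Matroid.Indep.subset_ground (show N.Indep {x} from hT1 x hx))

lemma simp_spanning (hT1 : ∀ x ∈ T, Nonloop N x)
    (hT2 : ∀ e, Nonloop N e → ∃! x, x ∈ T ∧ N.closure {x} = N.closure {e})
    (hll : ∀ x ∈ N.E, N.Indep {x}) : N.E ⊆ N.closure T := by
  intro x hx
  obtain ⟨t, ⟨htT, hcl⟩, -⟩ := hT2 x (hll x hx)
  have h1 : x ∈ N.closure {t} := hcl ▸ N.mem_closure_self x hx
  exact Matroid.closure_subset_closure N (singleton_subset_iff.2 htT) h1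

lemma simp_eRank [N.Finite] (hT1 : ∀ x ∈ T, Nonloop N x)
    (hT2 : ∀ e, Nonloop N e → ∃! x, x ∈ T ∧ N.closure {x} = N.closure {e})
    (hll : ∀ x ∈ N.E, N.Indep {x}) : eRank (N ↾ T) = eRank N := by
  have hTE := simp_subset_ground hT1
  have hspan := simp_spanning hT1 hT2 hll
  have h1 : eRank (N ↾ T) = eRk (N ↾ T) T := rfl
  rw [h1, eRk_restrict subset_rfl, ← eRank_eq_of_spanning hTE hspan]

lemma simp_pair_rank [N.Finite] (hT1 : ∀ x ∈ T, Nonloop N x)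
    (hT2 : ∀ e, Nonloop N e → ∃! x, x ∈ T ∧ N.closure {x} = N.closure {e})
    {t1 t2 : α} (h1 : t1 ∈ T) (h2 : t2 ∈ T) (hne : t1 ≠ t2) :
    eRk N {t1, t2} = 2 := by
  have hE1 : t1 ∈ N.E := simp_subset_ground hT1 h1
  have hE2 : t2 ∈ N.E := simp_subset_ground hT1 h2
  have hncl : t2 ∉ N.closure {t1} := by
    intro hcl
    have hpar : N.closure {t1} = N.closure {t2} :=
      closure_pair_eq (hT1 t1 h1) (hT1 t2 h2) hcl
    obtain ⟨w, -, huniq⟩ := hT2 t1 (hT1 t1 h1)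
    have e1 : t1 = w := huniq t1 ⟨h1, rfl⟩
    have e2 : t2 = w := huniq t2 ⟨h2, hpar.symm⟩
    exact hne (e1.trans e2.symm)
  have := eRk_insert_of_not_mem_closure (by simpa using hE1) hE2 hncl
  rw [Set.pair_comm]
  rw [this, eRk_indep (hT1 t1 h1), Set.encard_singleton, one_add_one_eq_two]

end SimpFacts

section MainSi

variable {M S : Matroid α} {X Y : Set α} {e : α}

lemma not_threeConnected_of_V3S [M.Finite] (hM : ThreeConnected M) (he : e ∈ M.E)
    (hV : Vertical3Sep M X e Y) (hS : IsSimplificationOf S (con M {e})) :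
    ¬ ThreeConnected S := by
  obtain ⟨heX, heY, hXY, hunion, hVKS1, hVKS2, heclX, heclY⟩ := hV
  obtain ⟨⟨hd1, hu1, hsep1, hc1a, hc1b⟩, hr1a, hr1b⟩ := hVKS1
  obtain ⟨⟨hd2, hu2, hsep2, hc2a, hc2b⟩, hr2a, hr2b⟩ := hVKS2
  set N := con M {e} with hN
  haveI hNfin : N.Finite := finite_con {e}
  obtain ⟨T, hT1, hT2, rfl⟩ := hS
  intro h3
  -- basic set facts
  have hdXY : ∀ a, a ∈ X → a ∉ Y := fun a h h' => Set.disjoint_left.1 hXY h h'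
  have hXE : X ⊆ M.E := by rw [← hunion]; exact subset_union_left.trans subset_union_left
  have hYE : Y ⊆ M.E := by rw [← hunion]; exact subset_union_right
  have hXEe : X ⊆ M.E \ {e} := subset_diff.2 ⟨hXE, disjoint_singleton_right.2 heX⟩
  have hYEe : Y ⊆ M.E \ {e} := subset_diff.2 ⟨hYE, disjoint_singleton_right.2 heY⟩
  have hNE : N.E = M.E \ {e} := rfl
  have hXuY : X ∪ Y = M.E \ {e} := by
    ext a
    simp only [← hunion, Set.mem_diff, Set.mem_union, Set.mem_singleton_iff]
    constructor
    · rintro (h | h)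
      · exact ⟨Or.inl (Or.inl h), fun hc => heX (hc ▸ h)⟩
      · exact ⟨Or.inr h, fun hc => heY (hc ▸ h)⟩
    · rintro ⟨(h | h) | h, hn⟩
      · exact Or.inl h
      · exact absurd h hn
      · exact Or.inr h
  -- nontrivial sides
  have h3Y : (3 : ℕ∞) ≤ Y.encard := by exact_mod_cast hc1b
  have h3X : (3 : ℕ∞) ≤ X.encard := by exact_mod_cast hc2a
  have hYnt : ∃ y1 ∈ Y, ∃ y2 ∈ Y, y1 ≠ y2 := by
    obtain ⟨a, b, ha, hb, hab⟩ :=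
      Set.one_lt_encard_iff.1 (lt_of_lt_of_le (by norm_num) h3Y)
    exact ⟨a, ha, b, hb, hab⟩
  have hXnt : ∃ y1 ∈ X, ∃ y2 ∈ X, y1 ≠ y2 := by
    obtain ⟨a, b, ha, hb, hab⟩ :=
      Set.one_lt_encard_iff.1 (lt_of_lt_of_le (by norm_num) h3X)
    exact ⟨a, ha, b, hb, hab⟩
  have hM2 : 2 ≤ M.E.encard := by
    obtain ⟨y1, hy1, -⟩ := hYnt
    have hp : ({e, y1} : Set α) ⊆ M.E := by
      rw [Set.insert_subset_iff, Set.singleton_subset_iff]; exact ⟨he, hYE hy1⟩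
    calc (2 : ℕ∞) = ({e, y1} : Set α).encard :=
          (Set.encard_pair (fun h : e = y1 => heY (by rw [h]; exact hy1))).symm
    _ ≤ M.E.encard := Set.encard_le_encard hp
  have hee : M.Indep {e} := nonloop_of_threeConnected hM he hM2
  -- N is loopless
  have hNll : ∀ x ∈ N.E, N.Indep {x} := by
    intro x hx
    rw [hNE] at hx
    have hxe : x ≠ e := fun h => hx.2 (h ▸ rfl)
    rw [hN, con_indep_iff he hee]
    refine ⟨by simp only [Set.mem_singleton_iff]; exact Ne.symm hxe, ?_⟩
    by_contra hdep
    have hxE : x ∈ M.E := hx.1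
    have hxnl : M.Indep {x} := nonloop_of_threeConnected hM hxE hM2
    have hecl : e ∈ M.closure {x} := by
      have hiff := hxnl.insert_indep_iff_of_notMem
        (by simp only [Set.mem_singleton_iff]; exact Ne.symm hxe : e ∉ ({x} : Set α))
      by_contra h'
      exact hdep (hiff.2 ⟨he, h'⟩)
    have hbig : 2 ≤ (M.E \ {x, e}).encard := by
      have hxXY : x ∈ X ∪ Y := by rw [hXuY]; exact hx
      have key : ∀ y1 y2 : α, y1 ∈ M.E → y2 ∈ M.E → y1 ≠ y2 → y1 ∉ ({x, e} : Set α) →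
          y2 ∉ ({x, e} : Set α) → 2 ≤ (M.E \ {x, e}).encard := by
        intro y1 y2 h1 h2 h12 hn1 hn2
        have hp : ({y1, y2} : Set α) ⊆ M.E \ {x, e} := by
          rw [Set.insert_subset_iff, Set.singleton_subset_iff]
          exact ⟨⟨h1, hn1⟩, ⟨h2, hn2⟩⟩
        calc (2 : ℕ∞) = ({y1, y2} : Set α).encard := (Set.encard_pair h12).symm
        _ ≤ _ := Set.encard_le_encard hp
      rcases hxXY with hxX | hxY
      · obtain ⟨y1, hy1, y2, hy2, h12⟩ := hYnt
        refine key y1 y2 (hYE hy1) (hYE hy2) h12 ?_ ?_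
        · rintro (rfl | rfl)
          · exact hdXY _ hxX hy1
          · exact heY hy1
        · rintro (rfl | rfl)
          · exact hdXY _ hxX hy2
          · exact heY hy2
      · obtain ⟨y1, hy1, y2, hy2, h12⟩ := hXnt
        refine key y1 y2 (hXE hy1) (hXE hy2) h12 ?_ ?_
        · rintro (rfl | rfl)
          · exact hdXY _ hy1 hxY
          · exact heX hy1
        · rintro (rfl | rfl)
          · exact hdXY _ hy2 hxY
          · exact heX hy2
    exact no_parallel_of_threeConnected hM hxE he hxe hecl hbig
  -- contraction ranks
  have hrXN : eRk N X + 1 = eRk M (X ∪ {e}) := by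
    rw [union_singleton]; exact eRk_con he hee hXEe
  have hrYN : eRk N Y + 1 = eRk M (Y ∪ {e}) := by
    rw [union_singleton]; exact eRk_con he hee hYEe
  have hrMN : eRank N + 1 = eRank M := eRank_con he hee
  have hMXcl : eRk M (X ∪ {e}) = eRk M X :=
    eRk_union_eq_of_subset_closure hXE (by simpa using heclX)
  have hMYcl : eRk M (Y ∪ {e}) = eRk M Y :=
    eRk_union_eq_of_subset_closure hYE (by simpa using heclY)
  have ha2 : 2 ≤ eRk N X := by
    have h3 : (3 : ℕ∞) ≤ eRk M X := by exact_mod_cast hr2a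
    have h4 : (2 : ℕ∞) + 1 ≤ eRk N X + 1 := by
      rw [hrXN, hMXcl]
      calc (2 : ℕ∞) + 1 = 3 := by norm_num
      _ ≤ eRk M X := h3
    exact (ENat.add_le_add_iff_right (by simp)).1 h4
  have hb2 : 2 ≤ eRk N Y := by
    have h3 : (3 : ℕ∞) ≤ eRk M Y := by exact_mod_cast hr1b
    have h4 : (2 : ℕ∞) + 1 ≤ eRk N Y + 1 := by
      rw [hrYN, hMYcl]
      calc (2 : ℕ∞) + 1 = 3 := by norm_num
      _ ≤ eRk M Y := h3
    exact (ENat.add_le_add_iff_right (by simp)).1 h4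
  -- the lambda inequality in N
  have hEdiff : M.E \ (X ∪ {e}) = Y := by
    ext a
    simp only [← hunion, Set.mem_diff, Set.mem_union, Set.mem_singleton_iff]
    constructor
    · rintro ⟨(h | h) | h, hn⟩
      · exact absurd (Or.inl h) hn
      · exact absurd (Or.inr h) hn
      · exact h
    · intro h
      exact ⟨Or.inr h, fun hc => hc.elim (fun h' => hdXY a h' h) (fun h' => heY (h' ▸ h))⟩
  have hsep1' : eRk M (X ∪ {e}) + eRk M Y + 1 ≤ eRank M + 3 := by
    have h0 : eRk M (X ∪ {e}) + eRk M (M.E \ (X ∪ {e})) + 1 ≤ eRank M + ((3 : ℕ) : ℕ∞) := hsep1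
    rw [hEdiff] at h0
    simpa using h0
  have hlam : eRk N X + eRk N Y + 1 ≤ eRank N + 2 := by
    have h1 : (eRk N X + 1) + (eRk N Y + 1) + 1 ≤ (eRank N + 1) + 3 := by
      rw [hrXN, hrYN, hMYcl, hrMN]
      exact hsep1'
    have h2 : (eRk N X + eRk N Y + 1) + 2 = (eRk N X + 1) + (eRk N Y + 1) + 1 := by ring
    have h3' : (eRank N + 2) + 2 = (eRank N + 1) + 3 := by ring
    refine (ENat.add_le_add_iff_right (by simp : (2:ℕ∞) ≠ ⊤)).1 ?_
    rw [h2, h3']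
    exact h1
  -- define the separation of S
  set U : Set α := T ∩ N.closure X with hU
  set V : Set α := T \ U with hVdef
  have hTE : T ⊆ N.E := simp_subset_ground hT1
  have hXNE : X ⊆ N.E := by rw [hNE]; exact hXEe
  have hYNE : Y ⊆ N.E := by rw [hNE]; exact hYEe
  have hUcl : eRk N U = eRk N X := by
    apply le_antisymm
    · calc eRk N U ≤ eRk N (N.closure X) := eRk_mono inter_subset_right
      _ = eRk N X := eRk_closure_eq hXNE
    · have hXclU : X ⊆ N.closure U := by
        intro x hx
        obtain ⟨tx, ⟨htT, hcl⟩, -⟩ := hT2 x (hNll x (hXNE hx))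
        have htU : tx ∈ U := by
          refine ⟨htT, ?_⟩
          have h1 : tx ∈ N.closure {tx} := N.mem_closure_self tx (hTE htT)
          rw [hcl] at h1
          exact Matroid.closure_subset_closure N (singleton_subset_iff.2 hx) h1
        have h2 : x ∈ N.closure {tx} := hcl ▸ N.mem_closure_self x (hXNE hx)
        exact Matroid.closure_subset_closure N (singleton_subset_iff.2 htU) h2
      calc eRk N X ≤ eRk N (N.closure U) := eRk_mono hXclU
      _ = eRk N U := eRk_closure_eq (inter_subset_left.trans hTE)
  have hrS : eRank (N ↾ T) = eRank N := simp_eRank hT1 hT2 hNll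
  have hrSU : eRk (N ↾ T) U = eRk N U := eRk_restrict inter_subset_left
  have hrSV : eRk (N ↾ T) V = eRk N V := eRk_restrict diff_subset
  have hVY : V ⊆ Y := by
    intro v hv
    have hvE : v ∈ N.E := hTE hv.1
    have hvX : v ∉ X := fun hx => hv.2 ⟨hv.1, N.subset_closure X hXNE hx⟩
    have hvXY : v ∈ X ∪ Y := by rw [hXuY, ← hNE]; exact hvE
    exact hvXY.resolve_left hvX
  have hUV : T = U ∪ V := (union_diff_cancel inter_subset_left).symm
  have hlamS : eRk (N ↾ T) U + eRk (N ↾ T) V + 1 ≤ eRank (N ↾ T) + 2 := by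
    rw [hrSU, hrSV, hrS, hUcl]
    calc eRk N X + eRk N V + 1 ≤ eRk N X + eRk N Y + 1 :=
      add_le_add (add_le_add le_rfl (eRk_mono hVY)) le_rfl
    _ ≤ eRank N + 2 := hlam
  by_cases hVbig : 2 ≤ V.encard
  · refine h3 2 U V (by norm_num) ?_
    refine ⟨disjoint_sdiff_right, ?_, ?_, ?_, hVbig⟩
    · rw [← hUV]; rfl
    · show eRk (N ↾ T) U + eRk (N ↾ T) ((N ↾ T).E \ U) + 1 ≤ eRank (N ↾ T) + ((2:ℕ) : ℕ∞)
      have hTU : (N ↾ T).E \ U = V := rfl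
      rw [hTU]
      simpa using hlamS
    · calc ((2:ℕ) : ℕ∞) = 2 := by norm_num
      _ ≤ eRk N X := ha2
      _ = eRk (N ↾ T) U := by rw [hrSU, hUcl]
      _ ≤ U.encard := by rw [hrSU]; exact (eRk_le_encard N U)
  · -- V is small
    by_cases hVemp : V = ∅
    · exfalso
      have hUeq : T ⊆ U := by
        intro a ha
        by_contra haU
        exact (Set.eq_empty_iff_forall_notMem.1 hVemp a) ⟨ha, haU⟩
      have hTsub : T ⊆ N.closure X := fun a ha => (hUeq ha).2
      have hrank_le : eRank N ≤ eRk N X := by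
        rw [eRank_eq_of_spanning hTE (simp_spanning hT1 hT2 hNll)]
        calc eRk N T ≤ eRk N (N.closure X) := eRk_mono hTsub
        _ = eRk N X := eRk_closure_eq hXNE
      have hcontra : eRk N X + 3 ≤ eRk N X + 2 := by
        calc eRk N X + 3 = eRk N X + 2 + 1 := by ring
        _ ≤ eRk N X + eRk N Y + 1 := by
            exact add_le_add (add_le_add le_rfl hb2) le_rfl
        _ ≤ eRank N + 2 := hlam
        _ ≤ eRk N X + 2 := add_le_add hrank_le le_rfl
      have := (ENat.add_le_add_iff_left (eRk_ne_top (M := N) (X := X))).1 hcontra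
      norm_num at this
    · obtain ⟨v, hv⟩ := Set.encard_eq_one.1 (le_antisymm
        (Order.le_of_lt_add_one (by rw [one_add_one_eq_two]; exact not_le.1 hVbig))
        (Set.one_le_encard_iff_nonempty.2 (Set.nonempty_iff_ne_empty.2 hVemp)))
      have hvV : v ∈ V := hv ▸ rfl
      have hvT : v ∈ T := hvV.1
      have hvE : v ∈ N.E := hTE hvT
      have hvcl : v ∉ N.closure U := by
        intro hc
        have h1 : N.closure U ⊆ N.closure X :=
          Matroid.closure_subset_closure_of_subset_closure inter_subset_right
        exact hvV.2 ⟨hvT, h1 hc⟩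
      have hrT : eRk N T = eRk N U + 1 := by
        have h1 : T = insert v U := by rw [hUV, hv, union_singleton]
        rw [h1]
        exact eRk_insert_of_not_mem_closure (inter_subset_left.trans hTE) hvE hvcl
      refine h3 1 U V (by norm_num) ?_
      refine ⟨disjoint_sdiff_right, ?_, ?_, ?_, ?_⟩
      · rw [← hUV]; rfl
      · show eRk (N ↾ T) U + eRk (N ↾ T) ((N ↾ T).E \ U) + 1 ≤ eRank (N ↾ T) + ((1:ℕ) : ℕ∞)
        have hTU : (N ↾ T).E \ U = V := rfl
        rw [hTU, hrSU, hrSV, Nat.cast_one]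
        have h1 : eRank (N ↾ T) = eRk N U + 1 := by
          rw [hrS, eRank_eq_of_spanning hTE (simp_spanning hT1 hT2 hNll), hrT]
        rw [h1]
        have h2 : eRk N V ≤ 1 := by
          calc eRk N V ≤ V.encard := eRk_le_encard N V
          _ = 1 := hv ▸ Set.encard_singleton v
        exact add_le_add (add_le_add le_rfl h2) le_rfl
      · rw [Nat.cast_one]
        refine Set.one_le_encard_iff_nonempty.2 ?_
        have : 2 ≤ U.encard := by
          calc (2:ℕ∞) ≤ eRk N X := ha2
          _ = eRk N U := hUcl.symm
          _ ≤ U.encard := eRk_le_encard N U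
        obtain ⟨a, b, ha', -, -⟩ := Set.one_lt_encard_iff.1 (lt_of_lt_of_le (by norm_num) this)
        exact ⟨a, ha'⟩
      · rw [Nat.cast_one, hv, Set.encard_singleton]

lemma enat_add_one_not_le {s : ℕ∞} (hs : s ≠ ⊤) (h : s + 1 ≤ s) : False := by
  nth_rewrite 2 [← add_zero s] at h
  have := (ENat.add_le_add_iff_left hs).1 h
  simp at this

lemma eRk_add_eRk_ne_top {M : Matroid α} [M.Finite] {A B : Set α} :
    eRk M A + eRk M B ≠ ⊤ := by
  intro hc
  rcases WithTop.add_eq_top.1 hc with h | h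
  · exact eRk_ne_top h
  · exact eRk_ne_top h

lemma V3S_of_not_threeConnected [M.Finite] (hM : ThreeConnected M) (he : e ∈ M.E)
    (hS : IsSimplificationOf S (con M {e})) (hnc : ¬ ThreeConnected S) :
    ∃ X Y, Vertical3Sep M X e Y := by
  set N := con M {e} with hN
  haveI hNfin : N.Finite := finite_con {e}
  obtain ⟨T, hT1, hT2, rfl⟩ := hS
  rw [ThreeConnected, NConnected] at hnc
  push_neg at hnc
  obtain ⟨k, U, V, hk3, hUV, hunion, hsep, hcU, hcV⟩ := hnc
  have hTE : T ⊆ N.E := simp_subset_ground hT1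
  haveI hSfin : (N ↾ T).Finite := Matroid.restrict_finite (N.ground_finite.subset hTE)
  have hSE : (N ↾ T).E = T := rfl
  have hUT : U ⊆ T := by rw [← hSE, ← hunion]; exact subset_union_left
  have hVT : V ⊆ T := by rw [← hSE, ← hunion]; exact subset_union_right
  have hNE : N.E = M.E \ {e} := rfl
  have hTV : (N ↾ T).E \ U = V := by
    rw [← hunion]
    exact Set.union_diff_cancel_left (le_of_eq hUV.inter_eq)
  have hsepUV : eRk (N ↾ T) U + eRk (N ↾ T) V + 1 ≤ eRank (N ↾ T) + (k : ℕ∞) := by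
    have h0 : eRk (N ↾ T) U + eRk (N ↾ T) ((N ↾ T).E \ U) + 1
        ≤ eRank (N ↾ T) + ((k : ℕ) : ℕ∞) := hsep
    rwa [hTV] at h0
  -- k ≠ 0
  have hk0 : k ≠ 0 := by
    rintro rfl
    rw [Nat.cast_zero, add_zero] at hsepUV
    have h1 : eRank (N ↾ T) ≤ eRk (N ↾ T) U + eRk (N ↾ T) V := by
      calc eRank (N ↾ T) = eRk (N ↾ T) (U ∪ V) := by rw [hunion]; rfl
      _ ≤ _ := eRk_union_le _ U V
    exact enat_add_one_not_le eRk_add_eRk_ne_top (hsepUV.trans h1)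
  -- nonempty parts
  have hU1 : (1 : ℕ∞) ≤ U.encard := by
    refine le_trans ?_ hcU
    exact_mod_cast Nat.one_le_cast.2 (Nat.one_le_iff_ne_zero.2 hk0)
  have hV1 : (1 : ℕ∞) ≤ V.encard := by
    refine le_trans ?_ hcV
    exact_mod_cast Nat.one_le_cast.2 (Nat.one_le_iff_ne_zero.2 hk0)
  obtain ⟨u, hu⟩ := Set.one_le_encard_iff_nonempty.1 hU1
  obtain ⟨v, hv⟩ := Set.one_le_encard_iff_nonempty.1 hV1
  have huT : u ∈ T := hUT hu
  have hvT : v ∈ T := hVT hv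
  have huE : u ∈ M.E := (hTE huT).1
  have hvE : v ∈ M.E := (hTE hvT).1
  have hue : u ≠ e := fun h => (hTE huT).2 (h ▸ rfl)
  have hve : v ≠ e := fun h => (hTE hvT).2 (h ▸ rfl)
  have huv : u ≠ v := fun h => Set.disjoint_left.1 hUV hu (h ▸ hv)
  have hM2 : 2 ≤ M.E.encard := by
    have hp : ({e, u} : Set α) ⊆ M.E := by
      rw [Set.insert_subset_iff, Set.singleton_subset_iff]; exact ⟨he, huE⟩
    calc (2 : ℕ∞) = ({e, u} : Set α).encard := (Set.encard_pair (Ne.symm hue)).symm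
    _ ≤ M.E.encard := Set.encard_le_encard hp
  have hee : M.Indep {e} := nonloop_of_threeConnected hM he hM2
  -- N is loopless
  have hNll : ∀ x ∈ N.E, N.Indep {x} := by
    intro x hx
    rw [hNE] at hx
    have hxe : x ≠ e := fun h => hx.2 (h ▸ rfl)
    rw [hN, con_indep_iff he hee]
    refine ⟨by simp only [Set.mem_singleton_iff]; exact Ne.symm hxe, ?_⟩
    by_contra hdep
    have hxE : x ∈ M.E := hx.1
    have hxnl : M.Indep {x} := nonloop_of_threeConnected hM hxE hM2
    have hecl : e ∈ M.closure {x} := by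
      have hiff := hxnl.insert_indep_iff_of_notMem
        (by simp only [Set.mem_singleton_iff]; exact Ne.symm hxe : e ∉ ({x} : Set α))
      by_contra h'
      exact hdep (hiff.2 ⟨he, h'⟩)
    -- x is a loop of N, so x ∉ T, giving two elements u v outside {x, e}
    have hxT : x ∉ T := by
      intro hxT
      have h' : N.Indep {x} := hT1 x hxT
      rw [hN, con_indep_iff he hee] at h'
      exact hdep h'.2
    have hbig : 2 ≤ (M.E \ {x, e}).encard := by
      have hp : ({u, v} : Set α) ⊆ M.E \ {x, e} := by
        rw [Set.insert_subset_iff, Set.singleton_subset_iff]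
        constructor
        · exact ⟨huE, by rintro (rfl | rfl); exacts [hxT huT, hue rfl]⟩
        · exact ⟨hvE, by rintro (rfl | rfl); exacts [hxT hvT, hve rfl]⟩
      calc (2 : ℕ∞) = ({u, v} : Set α).encard := (Set.encard_pair huv).symm
      _ ≤ _ := Set.encard_le_encard hp
    exact no_parallel_of_threeConnected hM hxE he hxe hecl hbig
  -- define X and Y
  set X : Set α := {x | x ∈ N.E ∧ ∃ t ∈ U, x ∈ N.closure {t}} with hX
  set Y : Set α := N.E \ X with hY
  have hXE' : X ⊆ N.E := fun x hx => hx.1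
  have hYE' : Y ⊆ N.E := diff_subset
  have hUX : U ⊆ X := fun t ht => ⟨hTE (hUT ht), t, ht, N.mem_closure_self t (hTE (hUT ht))⟩
  have hVY : V ⊆ Y := by
    intro w hw
    refine ⟨hTE (hVT hw), ?_⟩
    rintro ⟨-, t, htU, hcl⟩
    have hpar := closure_pair_eq (hT1 t (hUT htU)) (hT1 w (hVT hw)) hcl
    obtain ⟨z, -, huniq⟩ := hT2 t (hT1 t (hUT htU))
    have e1 : t = z := huniq t ⟨hUT htU, rfl⟩
    have e2 : w = z := huniq w ⟨hVT hw, hpar.symm⟩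
    have : w ∈ U := by rw [e2.trans e1.symm]; exact htU
    exact Set.disjoint_left.1 hUV this hw
  have hXclU : X ⊆ N.closure U := by
    rintro x ⟨-, t, htU, hcl⟩
    exact Matroid.closure_subset_closure N (singleton_subset_iff.2 htU) hcl
  have hYclV : Y ⊆ N.closure V := by
    intro y hy
    obtain ⟨t, ⟨htT, hcl⟩, -⟩ := hT2 y (hNll y hy.1)
    have hyt : y ∈ N.closure {t} := hcl ▸ N.mem_closure_self y hy.1
    have htUV : t ∈ U ∨ t ∈ V := by
      have : t ∈ U ∪ V := by rw [hunion]; exact htT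
      exact this
    rcases htUV with h | h
    · exact absurd ⟨hy.1, t, h, hyt⟩ hy.2
    · exact Matroid.closure_subset_closure N (singleton_subset_iff.2 h) hyt
  have hrX : eRk N X = eRk N U := by
    apply le_antisymm
    · calc eRk N X ≤ eRk N (N.closure U) := eRk_mono hXclU
      _ = eRk N U := eRk_closure_eq (hUT.trans hTE)
    · exact eRk_mono hUX
  have hrY : eRk N Y = eRk N V := by
    apply le_antisymm
    · calc eRk N Y ≤ eRk N (N.closure V) := eRk_mono hYclV
      _ = eRk N V := eRk_closure_eq (hVT.trans hTE)
    · exact eRk_mono hVY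
  -- the lambda inequality for (X, Y) in N
  have hlam : eRk N X + eRk N Y + 1 ≤ eRank N + (k : ℕ∞) := by
    rw [hrX, hrY]
    rw [eRk_restrict hUT, eRk_restrict hVT, simp_eRank hT1 hT2 hNll] at hsepUV
    exact hsepUV
  -- partition facts
  have hXY : Disjoint X Y := disjoint_sdiff_right
  have hdXYp : ∀ a, a ∈ X → a ∉ Y := fun a h h' => Set.disjoint_left.1 hXY h h'
  have hXuY : X ∪ Y = M.E \ {e} := by
    rw [hY, union_diff_cancel hXE']
    exact hNE
  have heX : e ∉ X := fun h => (hXE' h).2 rfl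
  have heY : e ∉ Y := fun h => (hYE' h).2 rfl
  have hXEe : X ⊆ M.E \ {e} := hXE'
  have hYEe : Y ⊆ M.E \ {e} := hYE'
  have hXE : X ⊆ M.E := fun x hx => (hXEe hx).1
  have hYE : Y ⊆ M.E := fun x hx => (hYEe hx).1
  have hiff : ∀ a, a ∈ M.E ↔ (a ∈ X ∨ a ∈ Y ∨ a = e) := by
    intro a
    constructor
    · intro ha
      by_cases hae : a = e
      · exact Or.inr (Or.inr hae)
      · have : a ∈ X ∪ Y := by rw [hXuY]; exact ⟨ha, hae⟩
        rcases this with h | h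
        · exact Or.inl h
        · exact Or.inr (Or.inl h)
    · rintro (h | h | rfl)
      · exact hXE h
      · exact hYE h
      · exact he
  have hdX : M.E \ X = Y ∪ {e} := by
    ext a
    simp only [Set.mem_diff, Set.mem_union, Set.mem_singleton_iff]
    constructor
    · rintro ⟨ha, hnX⟩
      rcases (hiff a).1 ha with h | h | h
      · exact absurd h hnX
      · exact Or.inl h
      · exact Or.inr h
    · rintro (h | rfl)
      · exact ⟨hYE h, fun h' => hdXYp a h' h⟩
      · exact ⟨he, heX⟩
  have hdY : M.E \ Y = X ∪ {e} := by
    ext a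
    simp only [Set.mem_diff, Set.mem_union, Set.mem_singleton_iff]
    constructor
    · rintro ⟨ha, hnY⟩
      rcases (hiff a).1 ha with h | h | h
      · exact Or.inl h
      · exact absurd h hnY
      · exact Or.inr h
    · rintro (h | rfl)
      · exact ⟨hXE h, hdXYp a h⟩
      · exact ⟨he, heY⟩
  have hdXe : M.E \ (X ∪ {e}) = Y := by
    ext a
    simp only [Set.mem_diff, Set.mem_union, Set.mem_singleton_iff, not_or]
    constructor
    · rintro ⟨ha, hnX, hne⟩
      rcases (hiff a).1 ha with h | h | h
      · exact absurd h hnX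
      · exact h
      · exact absurd h hne
    · intro h
      exact ⟨hYE h, fun h' => hdXYp a h' h, fun h' => heY (h' ▸ h)⟩
  have hdYe : M.E \ (Y ∪ {e}) = X := by
    ext a
    simp only [Set.mem_diff, Set.mem_union, Set.mem_singleton_iff, not_or]
    constructor
    · rintro ⟨ha, hnY, hne⟩
      rcases (hiff a).1 ha with h | h | h
      · exact h
      · exact absurd h hnY
      · exact absurd h hne
    · intro h
      exact ⟨hXE h, (fun h' => hdXYp a h h'), fun h' => heX (h' ▸ h)⟩
  have hunionM : X ∪ {e} ∪ Y = M.E := by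
    ext a
    simp only [Set.mem_union, Set.mem_singleton_iff]
    constructor
    · rintro ((h | h) | h)
      · exact hXE h
      · exact h ▸ he
      · exact hYE h
    · intro ha
      rcases (hiff a).1 ha with h | h | h
      · exact Or.inl (Or.inl h)
      · exact Or.inr h
      · exact Or.inl (Or.inr h)
  -- ranks via contraction
  have hrXM : eRk N X + 1 = eRk M (X ∪ {e}) := by
    rw [union_singleton]; exact eRk_con he hee hXEe
  have hrYM : eRk N Y + 1 = eRk M (Y ∪ {e}) := by
    rw [union_singleton]; exact eRk_con he hee hYEe
  have hrMN : eRank N + 1 = eRank M := eRank_con he hee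
  -- e is in the closure of both sides
  have hclosure : ∀ (W Z : Set α), W ∪ Z = X ∪ Y → Disjoint W Z →
      W ⊆ M.E \ {e} → Z ⊆ M.E \ {e} →
      eRk N W + eRk N Z + 1 ≤ eRank N + (k : ℕ∞) →
      M.E \ W = Z ∪ {e} → (k : ℕ∞) ≤ W.encard → (k : ℕ∞) ≤ Z.encard →
      eRk N W + 1 = eRk M (W ∪ {e}) → eRk N Z + 1 = eRk M (Z ∪ {e}) →
      e ∈ M.closure W := by
    intro W Z hWZ hdWZ hWEe hZEe hlamWZ hdW hkW hkZ hrWM hrZM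
    by_contra hecl
    have hWE : W ⊆ M.E := fun x hx => (hWEe hx).1
    have hMW : eRk M (W ∪ {e}) = eRk M W + 1 := by
      rw [union_singleton]
      exact eRk_insert_of_not_mem_closure hWE he hecl
    have hMWr : eRk M W = eRk N W := by
      have h1 : eRk M W + 1 = eRk N W + 1 := by rw [hrWM, hMW]
      exact (ENat.add_le_add_iff_right (by simp : (1:ℕ∞) ≠ ⊤)).1
        (le_of_eq h1) |>.antisymm
        ((ENat.add_le_add_iff_right (by simp : (1:ℕ∞) ≠ ⊤)).1 (le_of_eq h1.symm))
    refine hM k W (Z ∪ {e}) hk3 ?_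
    refine ⟨?_, ?_, ?_, hkW, ?_⟩
    · exact Set.disjoint_union_right.2 ⟨hdWZ,
        disjoint_singleton_right.2 (fun h => (hWEe h).2 rfl)⟩
    · rw [← hdW, union_diff_cancel hWE]
    · show eRk M W + eRk M (M.E \ W) + 1 ≤ eRank M + ((k : ℕ) : ℕ∞)
      rw [hdW, hMWr, ← hrZM, ← hrMN]
      have h2 : eRk N W + (eRk N Z + 1) + 1 = (eRk N W + eRk N Z + 1) + 1 := by ring
      rw [h2]
      calc (eRk N W + eRk N Z + 1) + 1 ≤ (eRank N + (k : ℕ∞)) + 1 :=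
        add_le_add hlamWZ le_rfl
      _ = eRank N + 1 + (k : ℕ∞) := by ring
    · calc ((k : ℕ) : ℕ∞) ≤ Z.encard := hkZ
      _ ≤ (Z ∪ {e}).encard := Set.encard_le_encard subset_union_left
  have hclX : e ∈ M.closure X :=
    hclosure X Y rfl hXY hXEe hYEe hlam hdX
      (hcU.trans (Set.encard_le_encard hUX)) (hcV.trans (Set.encard_le_encard hVY)) hrXM hrYM
  have hclY : e ∈ M.closure Y := by
    refine hclosure Y X (union_comm Y X) hXY.symm hYEe hXEe ?_ hdY
      (hcV.trans (Set.encard_le_encard hVY)) (hcU.trans (Set.encard_le_encard hUX)) hrYM hrXM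
    calc eRk N Y + eRk N X + 1 = eRk N X + eRk N Y + 1 := by ring
    _ ≤ _ := hlam
  -- full ranks of X and Y in M
  have hMXcl : eRk M (X ∪ {e}) = eRk M X :=
    eRk_union_eq_of_subset_closure hXE (by simpa using hclX)
  have hMYcl : eRk M (Y ∪ {e}) = eRk M Y :=
    eRk_union_eq_of_subset_closure hYE (by simpa using hclY)
  have hrXM2 : eRk M X = eRk N X + 1 := by rw [← hMXcl, ← hrXM]
  have hrYM2 : eRk M Y = eRk N Y + 1 := by rw [← hMYcl, ← hrYM]
  have hXr1 : 1 ≤ eRk N X := by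
    calc (1 : ℕ∞) = eRk N {u} := by
          rw [eRk_indep (hT1 u huT), Set.encard_singleton]
    _ ≤ eRk N X := eRk_mono (singleton_subset_iff.2 (hUX hu))
  have hYr1 : 1 ≤ eRk N Y := by
    calc (1 : ℕ∞) = eRk N {v} := by
          rw [eRk_indep (hT1 v hvT), Set.encard_singleton]
    _ ≤ eRk N Y := eRk_mono (singleton_subset_iff.2 (hVY hv))
  -- k = 1 is impossible
  have hk1 : k ≠ 1 := by
    rintro rfl
    rw [Nat.cast_one] at hlam
    refine hM 2 (X ∪ {e}) Y (by norm_num) ?_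
    refine ⟨?_, ?_, ?_, ?_, ?_⟩
    · exact Set.disjoint_union_left.2 ⟨hXY, disjoint_singleton_left.2 heY⟩
    · exact hunionM
    · show eRk M (X ∪ {e}) + eRk M (M.E \ (X ∪ {e})) + 1 ≤ eRank M + ((2:ℕ) : ℕ∞)
      rw [hdXe, ← hrXM, hrYM2, ← hrMN, Nat.cast_ofNat]
      have h2 : eRk N X + 1 + (eRk N Y + 1) + 1 = (eRk N X + eRk N Y + 1) + 2 := by ring
      rw [h2]
      calc (eRk N X + eRk N Y + 1) + 2 ≤ (eRank N + 1) + 2 := add_le_add hlam le_rfl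
      _ = eRank N + 1 + 2 := rfl
    · -- 2 ≤ |X ∪ {e}|
      have h1 : 2 ≤ eRk M X := by
        rw [hrXM2]
        exact add_le_add hXr1 le_rfl
      calc ((2:ℕ) : ℕ∞) = 2 := by norm_num
      _ ≤ eRk M X := h1
      _ ≤ X.encard := eRk_le_encard M X
      _ ≤ (X ∪ {e}).encard := Set.encard_le_encard subset_union_left
    · have h1 : 2 ≤ eRk M Y := by
        rw [hrYM2]
        exact add_le_add hYr1 le_rfl
      calc ((2:ℕ) : ℕ∞) = 2 := by norm_num
      _ ≤ eRk M Y := h1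
      _ ≤ Y.encard := eRk_le_encard M Y
  -- hence k = 2
  have hk2 : k = 2 := by omega
  subst hk2
  rw [Nat.cast_ofNat] at hlam
  -- both sides have rank at least 2 in N
  have hU2 : (1 : ℕ∞) < U.encard := by
    calc (1 : ℕ∞) < 2 := by norm_num
    _ ≤ U.encard := by exact_mod_cast hcU
  have hV2 : (1 : ℕ∞) < V.encard := by
    calc (1 : ℕ∞) < 2 := by norm_num
    _ ≤ V.encard := by exact_mod_cast hcV
  obtain ⟨t1, t2, ht1, ht2, ht12⟩ := Set.one_lt_encard_iff.1 hU2
  obtain ⟨s1, s2, hs1, hs2, hs12⟩ := Set.one_lt_encard_iff.1 hV2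
  have hXr2 : 2 ≤ eRk N X := by
    calc (2 : ℕ∞) = eRk N {t1, t2} :=
          (simp_pair_rank hT1 hT2 (hUT ht1) (hUT ht2) ht12).symm
    _ ≤ eRk N X := eRk_mono (by
        rw [Set.insert_subset_iff, Set.singleton_subset_iff]
        exact ⟨hUX ht1, hUX ht2⟩)
  have hYr2 : 2 ≤ eRk N Y := by
    calc (2 : ℕ∞) = eRk N {s1, s2} :=
          (simp_pair_rank hT1 hT2 (hVT hs1) (hVT hs2) hs12).symm
    _ ≤ eRk N Y := eRk_mono (by
        rw [Set.insert_subset_iff, Set.singleton_subset_iff]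
        exact ⟨hVY hs1, hVY hs2⟩)
  have hMX3 : 3 ≤ eRk M X := by
    rw [hrXM2]
    calc (3 : ℕ∞) = 2 + 1 := by norm_num
    _ ≤ eRk N X + 1 := add_le_add hXr2 le_rfl
  have hMY3 : 3 ≤ eRk M Y := by
    rw [hrYM2]
    calc (3 : ℕ∞) = 2 + 1 := by norm_num
    _ ≤ eRk N Y + 1 := add_le_add hYr2 le_rfl
  have hX3 : 3 ≤ X.encard := hMX3.trans (eRk_le_encard M X)
  have hY3 : 3 ≤ Y.encard := hMY3.trans (eRk_le_encard M Y)
  -- the key 3-separating inequality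
  have hksep : eRk M X + eRk M Y + 1 ≤ eRank M + 3 := by
    rw [hrXM2, hrYM2, ← hrMN]
    have h2 : eRk N X + 1 + (eRk N Y + 1) + 1 = (eRk N X + eRk N Y + 1) + 2 := by ring
    have h3 : eRank N + 1 + 3 = (eRank N + 2) + 2 := by ring
    rw [h2, h3]
    exact add_le_add hlam le_rfl
  -- assemble the vertical 3-separation
  refine ⟨X, Y, heX, heY, hXY, hunionM, ⟨⟨?_, ?_, ?_, ?_, ?_⟩, ?_, ?_⟩,
    ⟨⟨?_, ?_, ?_, ?_, ?_⟩, ?_, ?_⟩, hclX, hclY⟩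
  · exact Set.disjoint_union_left.2 ⟨hXY, disjoint_singleton_left.2 heY⟩
  · exact hunionM
  · show eRk M (X ∪ {e}) + eRk M (M.E \ (X ∪ {e})) + 1 ≤ eRank M + ((3:ℕ) : ℕ∞)
    rw [hdXe, hMXcl, Nat.cast_ofNat]
    exact hksep
  · calc ((3:ℕ) : ℕ∞) = 3 := by norm_num
    _ ≤ X.encard := hX3
    _ ≤ (X ∪ {e}).encard := Set.encard_le_encard subset_union_left
  · calc ((3:ℕ) : ℕ∞) = 3 := by norm_num
    _ ≤ Y.encard := hY3
  · rw [hMXcl]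
    calc ((3:ℕ) : ℕ∞) = 3 := by norm_num
    _ ≤ eRk M X := hMX3
  · calc ((3:ℕ) : ℕ∞) = 3 := by norm_num
    _ ≤ eRk M Y := hMY3
  · exact Set.disjoint_union_right.2 ⟨hXY, disjoint_singleton_right.2 heX⟩
  · rw [← hdX, union_diff_cancel hXE]
  · show eRk M X + eRk M (M.E \ X) + 1 ≤ eRank M + ((3:ℕ) : ℕ∞)
    rw [hdX, hMYcl, Nat.cast_ofNat]
    exact hksep
  · calc ((3:ℕ) : ℕ∞) = 3 := by norm_num
    _ ≤ X.encard := hX3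
  · calc ((3:ℕ) : ℕ∞) = 3 := by norm_num
    _ ≤ Y.encard := hY3
    _ ≤ (Y ∪ {e}).encard := Set.encard_le_encard subset_union_left
  · calc ((3:ℕ) : ℕ∞) = 3 := by norm_num
    _ ≤ eRk M X := hMX3
  · rw [hMYcl]
    calc ((3:ℕ) : ℕ∞) = 3 := by norm_num
    _ ≤ eRk M Y := hMY3

end MainSi

section Dual

variable {M S : Matroid α} {X : Set α} {e : α}

lemma eRk_dual_add [M.Finite] (hX : X ⊆ M.E) :
    eRk M✶ X + eRank M = X.encard + eRk M (M.E \ X) := by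
  obtain ⟨I, hI⟩ := M✶.exists_isBasis X (by rwa [Matroid.dual_ground])
  obtain ⟨B, hB, hIB⟩ := hI.indep.exists_isBase_superset
  have hBX : B ∩ X = I :=
    (hI.eq_of_subset_indep (hB.indep.subset inter_subset_left)
      (subset_inter hIB hI.subset) inter_subset_right).symm
  have hbasis : M.IsBasis ((M.E \ B) ∩ (M.E \ X)) (M.E \ X) := by
    have h0 : M✶.IsBasis (B ∩ X) X := hBX.symm ▸ hI
    have h1 := hB.compl_inter_isBasis_of_inter_isBasis h0
    rwa [Matroid.dual_dual, Matroid.dual_ground] at h1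
  have hrdualX : eRk M✶ X = (B ∩ X).encard := by
    rw [eRk_eq_of_basis hI, hBX]
  have hrcompl : eRk M (M.E \ X) = ((M.E \ B) ∩ (M.E \ X)).encard :=
    eRk_eq_of_basis hbasis
  have hrank : eRank M = (M.E \ B).encard := by
    have h2 := hB.compl_isBase_of_dual
    exact eRank_eq_of_base h2
  rw [hrdualX, hrank, hrcompl]
  have h1 : (X \ B).encard + (X ∩ B).encard = X.encard :=
    Set.encard_diff_add_encard_inter X B
  have h3 : (M.E \ B) \ (M.E \ X) = X \ B := by
    ext a
    simp only [Set.mem_diff, not_and, not_not]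
    constructor
    · rintro ⟨⟨haE, haB⟩, h⟩
      exact ⟨h haE, haB⟩
    · rintro ⟨haX, haB⟩
      exact ⟨⟨hX haX, haB⟩, fun _ => haX⟩
  have h2 : (X \ B).encard + ((M.E \ B) ∩ (M.E \ X)).encard = (M.E \ B).encard := by
    rw [← h3]
    exact Set.encard_diff_add_encard_inter (M.E \ B) (M.E \ X)
  rw [← h2, ← h1, inter_comm X B]
  ring

lemma eRank_dual_add [M.Finite] : eRank M✶ + eRank M = M.E.encard := by
  have h := eRk_dual_add (M := M) (X := M.E) subset_rfl
  rw [diff_self, eRk_empty, add_zero] at h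
  exact h

lemma ksep_dual [M.Finite] (hX : X ⊆ M.E) (k : ℕ) :
    KSeparating M✶ k X ↔ KSeparating M k X := by
  have hd1 : eRk M✶ X + eRank M = X.encard + eRk M (M.E \ X) := eRk_dual_add hX
  have hd2 : eRk M✶ (M.E \ X) + eRank M = (M.E \ X).encard + eRk M X := by
    have h := eRk_dual_add (M := M) (X := M.E \ X) diff_subset
    rwa [diff_diff_cancel_left hX] at h
  have hdE : eRank M✶ + eRank M = M.E.encard := eRank_dual_add
  have henc : X.encard + (M.E \ X).encard = M.E.encard := by
    rw [add_comm]
    exact Set.encard_diff_add_encard_of_subset hX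
  have hEne : M.E.encard ≠ ⊤ := Set.encard_ne_top_iff.2 M.ground_finite
  have hrr : eRank M + eRank M ≠ ⊤ := by
    intro hc
    rcases WithTop.add_eq_top.1 hc with h | h <;> exact eRk_ne_top h
  have hL : (eRk M✶ X + eRk M✶ (M✶.E \ X) + 1) + (eRank M + eRank M)
      = M.E.encard + (eRk M X + eRk M (M.E \ X) + 1) := by
    have hg : M✶.E \ X = M.E \ X := rfl
    rw [hg]
    calc (eRk M✶ X + eRk M✶ (M.E \ X) + 1) + (eRank M + eRank M)
        = (eRk M✶ X + eRank M) + (eRk M✶ (M.E \ X) + eRank M) + 1 := by ring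
    _ = (X.encard + eRk M (M.E \ X)) + ((M.E \ X).encard + eRk M X) + 1 := by
        rw [hd1, hd2]
    _ = (X.encard + (M.E \ X).encard) + (eRk M X + eRk M (M.E \ X) + 1) := by ring
    _ = M.E.encard + (eRk M X + eRk M (M.E \ X) + 1) := by rw [henc]
  have hR : (eRank M✶ + (k : ℕ∞)) + (eRank M + eRank M)
      = M.E.encard + (eRank M + (k : ℕ∞)) := by
    calc (eRank M✶ + (k : ℕ∞)) + (eRank M + eRank M)
        = (eRank M✶ + eRank M) + (eRank M + (k : ℕ∞)) := by ring
    _ = M.E.encard + (eRank M + (k : ℕ∞)) := by rw [hdE]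
  constructor
  · intro h
    have h' : (eRk M✶ X + eRk M✶ (M✶.E \ X) + 1) + (eRank M + eRank M)
        ≤ (eRank M✶ + (k : ℕ∞)) + (eRank M + eRank M) := add_le_add h le_rfl
    rw [hL, hR] at h'
    exact (ENat.add_le_add_iff_left hEne).1 h'
  · intro h
    have h' : M.E.encard + (eRk M X + eRk M (M.E \ X) + 1)
        ≤ M.E.encard + (eRank M + (k : ℕ∞)) := add_le_add le_rfl h
    rw [← hL, ← hR] at h'
    exact (ENat.add_le_add_iff_right hrr).1 h'

lemma threeConnected_of_dual [M.Finite] (h : ThreeConnected M) : ThreeConnected M✶ := by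
  intro k X Y hk hsep
  obtain ⟨hdj, hun, hs, h1, h2⟩ := hsep
  have hXE : X ⊆ M.E := by
    have := hun
    rw [Matroid.dual_ground] at this
    rw [← this]
    exact subset_union_left
  refine h k X Y hk ⟨hdj, by rwa [Matroid.dual_ground] at hun, (ksep_dual hXE k).1 hs, h1, h2⟩

lemma finite_of_simplification {N S : Matroid α} [hNf : N.Finite]
    (hS : IsSimplificationOf S N) : S.Finite := by
  obtain ⟨T, hT1, -, rfl⟩ := hS
  exact Matroid.restrict_finite (N.ground_finite.subset (simp_subset_ground hT1))

lemma con_dual_eq_del_dual (M : Matroid α) (e : α) : con M✶ {e} = (del M {e})✶ := by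
  show (del M✶✶ {e})✶ = (del M {e})✶
  rw [Matroid.dual_dual]

lemma coConn3_iff_siConn3 [M.Finite] (e : α) :
    CoConn3 (del M {e}) ↔ SiConn3 (con M✶ {e}) := by
  constructor
  · intro h S hS
    have hS' : IsCosimplificationOf S✶ (del M {e}) := by
      show IsSimplificationOf S✶✶ (del M {e})✶
      rw [Matroid.dual_dual, ← con_dual_eq_del_dual]
      exact hS
    have h3 : ThreeConnected S✶ := h S✶ hS'
    haveI hSf : S.Finite := by
      haveI : (con M✶ {e}).Finite := finite_con {e}
      exact finite_of_simplification hS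
    have h4 := threeConnected_of_dual h3
    rwa [Matroid.dual_dual] at h4
  · intro h S hS
    have hS' : IsSimplificationOf S✶ (con M✶ {e}) := by
      rw [con_dual_eq_del_dual]
      exact hS
    have h3 : ThreeConnected S✶ := h S✶ hS'
    haveI hSf : S✶.Finite := by
      haveI : (con M✶ {e}).Finite := finite_con {e}
      exact finite_of_simplification hS'
    have h4 := threeConnected_of_dual h3
    rwa [Matroid.dual_dual] at h4

lemma si_iff [M.Finite] (hM : ThreeConnected M) (he : e ∈ M.E) :
    ¬ SiConn3 (con M {e}) ↔ ∃ X Y, Vertical3Sep M X e Y := by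
  constructor
  · intro h
    rw [SiConn3] at h
    push_neg at h
    obtain ⟨S, hS, hnc⟩ := h
    exact V3S_of_not_threeConnected hM he hS hnc
  · rintro ⟨X, Y, hV⟩ hcon
    obtain ⟨S, hS⟩ := exists_simplification (con M {e})
    exact not_threeConnected_of_V3S hM he hV hS (hcon S hS)

end Dual

/-- Lemma 2.5. -/
theorem statement_17 {α : Type*} (M : Matroid α) [M.Finite]
    (hM : ThreeConnected M) (e : α) (he : e ∈ M.E) :
    (¬ SiConn3 (con M {e}) ↔ ∃ X Y, Vertical3Sep M X e Y) ∧
    (¬ CoConn3 (del M {e}) ↔ ∃ X Y, Cyclic3Sep M X e Y) := by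
  constructor
  · exact si_iff hM he
  · haveI : M✶.Finite := Matroid.dual_finite
    have hM' : ThreeConnected M✶ := threeConnected_of_dual hM
    have he' : e ∈ M✶.E := he
    have h1 : ¬ CoConn3 (del M {e}) ↔ ¬ SiConn3 (con M✶ {e}) :=
      not_congr (coConn3_iff_siConn3 e)
    rw [h1, si_iff hM' he']
    exact Iff.rfl

end ElasticPaper
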